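/- Assume assumption A holds. Then there exists ε₀ > 0 such that for every positive integer m with 1/m < ε₀ (ε = 1/m), the only complex eigenvalue of the Euler companion matrix C of modulus 1 is the eigenvalue 1; that is, if λ ∈ ℂ satisfies det(λI − C) = 0 and |λ| = 1, then λ = 1. -/

import Mathlib

open Matrix Complex Filter Metric Topology

/-- The characteristic function `Δ(μ) = det(μ I - A - e^{-μ} B)` of the linear DDE
`ż(t) = A z(t) + B z(t-1)`. -/
noncomputable def charDDE (n : ℕ) (A B : Matrix (Fin n) (Fin n) ℝ) (μ : ℂ) : ℂ :=
  Matrix.det (μ • (1 : Matrix (Fin n) (Fin n) ℂ)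
    - A.map (Complex.ofReal) - Complex.exp (-μ) • B.map (Complex.ofReal))

/-- Assumption A: `0` is a root of `Δ` of algebraic multiplicity 2 and geometric
multiplicity 1, and every nonzero root has nonzero real part. -/
def AssumptionA (n : ℕ) (A B : Matrix (Fin n) (Fin n) ℝ) : Prop :=
  charDDE n A B 0 = 0 ∧
  deriv (charDDE n A B) 0 = 0 ∧
  iteratedDeriv 2 (charDDE n A B) 0 ≠ 0 ∧
  Module.finrank ℝ (LinearMap.ker ((A + B).mulVecLin)) = 1 ∧
  ∀ μ : ℂ, μ ≠ 0 → charDDE n A B μ = 0 → μ.re ≠ 0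

/-- The Euler companion matrix `C` of the forward Euler discretization
`z_{k+1} = z_k + ε A z_k + ε B z_{k-m}`, with step size `ε = 1/m`, written in
`(m+1) × (m+1)` blocks of size `n × n`: the first block row is
`(I + εA, 0, …, 0, εB)`, the subdiagonal blocks are `I`, all other blocks vanish. -/
noncomputable def eulerC (n m : ℕ) (A B : Matrix (Fin n) (Fin n) ℝ) :
    Matrix (Fin (m+1) × Fin n) (Fin (m+1) × Fin n) ℝ :=
  fun ip jq =>
    if ip.1 = 0 then
      (if jq.1 = 0 then (if ip.2 = jq.2 then 1 else 0) + (1 / (m : ℝ)) * A ip.2 jq.2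
       else if (jq.1 : ℕ) = m then (1 / (m : ℝ)) * B ip.2 jq.2 else 0)
    else if (jq.1 : ℕ) + 1 = (ip.1 : ℕ) then (if ip.2 = jq.2 then 1 else 0) else 0

noncomputable def PsiDDE (n : ℕ) (A B : Matrix (Fin n) (Fin n) ℝ) (p : ℂ × ℂ) : ℂ :=
  Matrix.det (p.2 • (1 : Matrix (Fin n) (Fin n) ℂ)
    - A.map (Complex.ofReal) - p.1 • B.map (Complex.ofReal))

noncomputable def Complex.abs : AbsoluteValue ℂ ℝ where
  toFun z := ‖z‖
  map_mul' := norm_mul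
  nonneg' := norm_nonneg
  eq_zero' _ := norm_eq_zero
  add_le' := norm_add_le

lemma Complex.norm_eq_abs (z : ℂ) : ‖z‖ = Complex.abs z := rfl

lemma Complex.abs_natCast (k : ℕ) : Complex.abs (k : ℂ) = k := by
  show ‖(k : ℂ)‖ = k; simp

lemma Complex.abs_ofReal (r : ℝ) : Complex.abs (r : ℂ) = |r| := by
  show ‖(r : ℂ)‖ = |r|; simp

lemma Complex.abs_exp (z : ℂ) : Complex.abs (Complex.exp z) = Real.exp z.re :=
  Complex.norm_exp z

lemma Complex.abs_exp_sub_one_le {x : ℂ} (hx : Complex.abs x ≤ 1) :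
    Complex.abs (Complex.exp x - 1) ≤ 2 * Complex.abs x :=
  Complex.norm_exp_sub_one_le hx

lemma Complex.re_le_abs (z : ℂ) : z.re ≤ Complex.abs z := Complex.re_le_norm z

lemma Complex.sq_abs (z : ℂ) : Complex.abs z ^ 2 = Complex.normSq z := Complex.sq_norm z

lemma Complex.continuous_abs : Continuous Complex.abs := continuous_norm

lemma charDDE_eq_psi (n : ℕ) (A B : Matrix (Fin n) (Fin n) ℝ) (μ : ℂ) :
    charDDE n A B μ = PsiDDE n A B (Complex.exp (-μ), μ) := rfl

lemma psi_contDiff (n : ℕ) (A B : Matrix (Fin n) (Fin n) ℝ) :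
    ContDiff ℂ 1 (PsiDDE n A B) := by
  have : PsiDDE n A B = fun p : ℂ × ℂ =>
      ∑ σ : Equiv.Perm (Fin n), (Equiv.Perm.sign σ : ℤ) •
        ∏ i, (p.2 • (1 : Matrix (Fin n) (Fin n) ℂ)
          - A.map (Complex.ofReal) - p.1 • B.map (Complex.ofReal)) (σ i) i := by
    funext p; exact Matrix.det_apply _
  rw [this]
  apply ContDiff.sum
  intro σ _
  apply ContDiff.const_smul
  apply contDiff_prod
  intro i _
  simp only [Matrix.sub_apply, Matrix.smul_apply, smul_eq_mul]
  exact ((contDiff_snd.mul contDiff_const).sub contDiff_const).sub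
    (contDiff_fst.mul contDiff_const)

lemma charDDE_differentiable (n : ℕ) (A B : Matrix (Fin n) (Fin n) ℝ) :
    Differentiable ℂ (charDDE n A B) := by
  have h1 : Differentiable ℂ (fun μ : ℂ => (Complex.exp (-μ), μ)) :=
    (Complex.differentiable_exp.comp differentiable_neg).prodMk differentiable_id
  rw [show charDDE n A B = PsiDDE n A B ∘ (fun μ : ℂ => (Complex.exp (-μ), μ)) from
    funext fun μ => charDDE_eq_psi n A B μ]
  exact ((psi_contDiff n A B).differentiable one_ne_zero).comp h1

lemma quad_lower {f : ℂ → ℂ} (hf : AnalyticAt ℂ f 0) (h0 : f 0 = 0)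
    (h1 : deriv f 0 = 0) (h2 : iteratedDeriv 2 f 0 ≠ 0) :
    ∃ ρ > (0:ℝ), ∀ᶠ z in 𝓝[≠] (0:ℂ), ρ * Complex.abs z ^ 2 ≤ Complex.abs (f z) := by
  obtain ⟨p, hp⟩ := hf
  set g := dslope f 0 with hg
  set h := dslope g 0 with hh
  have hgp : HasFPowerSeriesAt g p.fslope 0 := hp.has_fpower_series_dslope_fslope
  have hhp : HasFPowerSeriesAt h p.fslope.fslope 0 := hgp.has_fpower_series_dslope_fslope
  -- h 0 = p.coeff 2
  have hh0 : h 0 = p.coeff 2 := by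
    have := (hhp.coeff_zero (fun _ => (1:ℂ))).symm
    rw [this]
    show p.fslope.fslope.coeff 0 = p.coeff 2
    rw [FormalMultilinearSeries.coeff_fslope, FormalMultilinearSeries.coeff_fslope]
  -- p.coeff 2 ≠ 0
  have hc2 : p.coeff 2 ≠ 0 := by
    obtain ⟨r, hball⟩ := hp
    have hfs := hball.factorial_smul (y := (1:ℂ)) 2
    intro hzero
    apply h2
    rw [iteratedDeriv_eq_iteratedFDeriv, ← hfs]
    show (Nat.factorial 2) • p.coeff 2 = 0
    rw [hzero, smul_zero]
  have hhne : h 0 ≠ 0 := by rw [hh0]; exact hc2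
  have hcont : ContinuousAt h 0 := hhp.continuousAt
  refine ⟨Complex.abs (h 0) / 2, div_pos (AbsoluteValue.pos Complex.abs hhne) two_pos, ?_⟩
  have hev : ∀ᶠ z in 𝓝 (0:ℂ), Complex.abs (h 0) / 2 ≤ Complex.abs (h z) := by
    have : Tendsto (fun z => Complex.abs (h z)) (𝓝 0) (𝓝 (Complex.abs (h 0))) :=
      (Complex.continuous_abs.continuousAt).comp hcont
    have hlt : Complex.abs (h 0) / 2 < Complex.abs (h 0) := by
      have := AbsoluteValue.pos Complex.abs hhne; linarith
    exact this.eventually (eventually_ge_nhds hlt)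
  rw [eventually_nhdsWithin_iff]
  filter_upwards [hev] with z hz hzne
  -- f z = z^2 * h z
  have hfz : f z = z ^ 2 * h z := by
    have hne : z ≠ 0 := hzne
    have e1 : g z = f z / z := by
      rw [hg, dslope_of_ne _ hne, slope_def_field, h0, sub_zero, sub_zero]
    have hg0 : g 0 = 0 := by rw [hg, dslope_same]; exact h1
    have e2 : h z = g z / z := by
      rw [hh, dslope_of_ne _ hne, slope_def_field, hg0, sub_zero, sub_zero]
    rw [e2, e1]
    field_simp
  rw [hfz]
  rw [_root_.map_mul, map_pow]
  calc Complex.abs (h 0) / 2 * Complex.abs z ^ 2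
      ≤ Complex.abs (h z) * Complex.abs z ^ 2 := by
        apply mul_le_mul_of_nonneg_right hz (by positivity)
    _ = Complex.abs z ^ 2 * Complex.abs (h z) := by ring

lemma keybound {m : ℕ} (hm : 0 < m) (ν : ℂ)
    (h1 : 2 * Complex.abs ν ≤ m) (h2 : Complex.abs ν ^ 2 ≤ m) :
    Complex.abs (((1 + ν / m) ^ m)⁻¹ - Complex.exp (-ν))
      ≤ 2 * Real.exp (Complex.abs ν) * Complex.abs ν ^ 2 / m := by
  have hm0 : (0:ℝ) < m := Nat.cast_pos.mpr hm
  set w : ℂ := ν / m with hw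
  have habsw : Complex.abs w = Complex.abs ν / m := by
    rw [hw, map_div₀, Complex.abs_natCast]
  have hwhalf : Complex.abs w ≤ 1 / 2 := by
    rw [habsw, div_le_div_iff₀ hm0 two_pos] at *
    nlinarith [Complex.abs.nonneg ν]
  have hwlt : ‖w‖ < 1 := by
    rw [Complex.norm_eq_abs]; linarith
  have hlam_ne : (1 : ℂ) + w ≠ 0 := by
    intro h
    have hw1 : w = -1 := by linear_combination h - (1:ℂ)
    rw [hw1] at hwhalf
    simp at hwhalf
    linarith
  -- log estimate
  have hlog : Complex.abs ((m : ℂ) * Complex.log (1 + w) - ν) ≤ Complex.abs ν ^ 2 / m := by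
    have hest := Complex.norm_log_one_add_sub_self_le hwlt
    have hfac : (m : ℂ) * Complex.log (1 + w) - ν = (m : ℂ) * (Complex.log (1 + w) - w) := by
      have hmne : (m:ℂ) ≠ 0 := Nat.cast_ne_zero.mpr hm.ne'
      have hmw : (m:ℂ) * w = ν := by rw [hw]; field_simp
      rw [mul_sub, hmw]
    rw [hfac, _root_.map_mul, Complex.abs_natCast]
    have hb : ‖w‖ ^ 2 * (1 - ‖w‖)⁻¹ / 2 ≤ ‖w‖ ^ 2 := by
      have h3 : (1:ℝ) - ‖w‖ ≥ 1/2 := by rw [Complex.norm_eq_abs]; linarith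
      have h4 : (1 - ‖w‖)⁻¹ ≤ 2 := by
        rw [inv_le_comm₀ (by linarith) two_pos]; linarith
      nlinarith [norm_nonneg w, sq_nonneg ‖w‖]
    have : Complex.abs (Complex.log (1 + w) - w) ≤ ‖w‖ ^ 2 := le_trans hest hb
    calc (m:ℝ) * Complex.abs (Complex.log (1 + w) - w) ≤ (m:ℝ) * ‖w‖ ^ 2 := by
          exact mul_le_mul_of_nonneg_left this (le_of_lt hm0)
      _ = Complex.abs ν ^ 2 / m := by
          rw [Complex.norm_eq_abs, habsw]
          field_simp
  -- rewrite the power as exp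
  have hpow : ((1 + ν / m) ^ m)⁻¹ = Complex.exp (-((m:ℂ) * Complex.log (1 + w))) := by
    rw [Complex.exp_neg, Complex.exp_nat_mul, Complex.exp_log hlam_ne, hw]
  rw [hpow]
  set δ : ℂ := ν - (m : ℂ) * Complex.log (1 + w) with hδ
  have hδabs : Complex.abs δ ≤ Complex.abs ν ^ 2 / m := by
    have hδ2 : δ = -((m:ℂ) * Complex.log (1 + w) - ν) := by rw [hδ]; ring
    rw [hδ2, AbsoluteValue.map_neg]
    exact hlog
  have hδ1 : Complex.abs δ ≤ 1 := by
    refine le_trans hδabs ?_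
    rw [div_le_one hm0]; exact h2
  have hsplit : Complex.exp (-((m:ℂ) * Complex.log (1 + w))) - Complex.exp (-ν)
      = Complex.exp (-ν) * (Complex.exp δ - 1) := by
    rw [mul_sub, mul_one, ← Complex.exp_add]
    rw [hδ, show -ν + (ν - (m:ℂ) * Complex.log (1 + w)) = -((m:ℂ) * Complex.log (1 + w)) by ring]
  rw [hsplit, _root_.map_mul]
  have he1 : Complex.abs (Complex.exp (-ν)) ≤ Real.exp (Complex.abs ν) := by
    rw [Complex.abs_exp]
    apply Real.exp_le_exp.mpr
    calc (-ν).re ≤ Complex.abs (-ν) := Complex.re_le_abs _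
      _ = Complex.abs ν := by rw [AbsoluteValue.map_neg]
  have he2 : Complex.abs (Complex.exp δ - 1) ≤ 2 * Complex.abs δ :=
    Complex.abs_exp_sub_one_le hδ1
  calc Complex.abs (Complex.exp (-ν)) * Complex.abs (Complex.exp δ - 1)
      ≤ Real.exp (Complex.abs ν) * (2 * (Complex.abs ν ^ 2 / m)) := by
        apply mul_le_mul he1 (le_trans he2 ?_) (Complex.abs.nonneg _) (Real.exp_nonneg _)
        exact mul_le_mul_of_nonneg_left hδabs two_pos.le
    _ = 2 * Real.exp (Complex.abs ν) * Complex.abs ν ^ 2 / m := by ring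

lemma euler_eigen {n m : ℕ} (hm : 0 < m) (A B : Matrix (Fin n) (Fin n) ℝ) (lam : ℂ)
    (hlam0 : lam ≠ 0)
    (hdet : Matrix.det (lam • (1 : Matrix (Fin (m+1) × Fin n) (Fin (m+1) × Fin n) ℂ)
          - (eulerC n m A B).map Complex.ofReal) = 0) :
    ∃ w : Fin n → ℂ, w ≠ 0 ∧ ∀ p : Fin n,
      (m : ℂ) * (lam - 1) * w p
        = ((A.map Complex.ofReal).mulVec w) p
          + (lam ^ m)⁻¹ * ((B.map Complex.ofReal).mulVec w) p := by
  classical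
  set C' : Matrix (Fin (m+1) × Fin n) (Fin (m+1) × Fin n) ℂ :=
    (eulerC n m A B).map Complex.ofReal with hC'
  obtain ⟨v, hv, hmul⟩ := (Matrix.exists_mulVec_eq_zero_iff).mpr hdet
  have hCv : ∀ ip : Fin (m+1) × Fin n,
      (∑ jq : Fin (m+1) × Fin n, C' ip jq * v jq) = lam * v ip := by
    intro ip
    have := congrFun hmul ip
    simp only [Matrix.sub_mulVec, Matrix.smul_mulVec, Matrix.one_mulVec,
      Pi.sub_apply, Pi.smul_apply, smul_eq_mul, Pi.zero_apply, sub_eq_zero] at this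
    rw [this]
    simp [Matrix.mulVec, dotProduct]
  -- the recursion for rows i ≠ 0
  have hrec : ∀ (i : Fin (m+1)), i ≠ 0 → ∀ (p : Fin n),
      v (⟨(i : ℕ) - 1, by omega⟩, p) = lam * v (i, p) := by
    intro i hi p
    have hival : (i : ℕ) ≠ 0 := fun h => hi (Fin.ext h)
    set j₀ : Fin (m+1) := ⟨(i : ℕ) - 1, by omega⟩ with hj₀
    have hsum : (∑ jq : Fin (m+1) × Fin n, C' (i, p) jq * v jq) = v (j₀, p) := by
      rw [Fintype.sum_prod_type]
      have hterm : ∀ (j : Fin (m+1)) (q : Fin n),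
          C' (i, p) (j, q) * v (j, q)
            = if q = p then (if j = j₀ then v (j, q) else 0) else 0 := by
        intro j q
        rw [hC', Matrix.map_apply]
        show (((eulerC n m A B) (i, p) (j, q) : ℝ) : ℂ) * v (j, q) = _
        rw [eulerC]
        simp only [hi, if_neg hi]
        have hiv : (i : ℕ) - 1 + 1 = (i : ℕ) := by omega
        by_cases hj : (j : ℕ) + 1 = (i : ℕ)
        · have hjj : j = j₀ := by
            rw [hj₀]; apply Fin.ext; simp; omega
          by_cases hq : p = q
          · simp [hj, hjj, hq, hiv, hj₀]
          · simp [hj, hjj, hq, Ne.symm hq]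
        · have hjj : j ≠ j₀ := by
            intro h; apply hj; rw [h, hj₀]; simp; omega
          simp [hj, hjj]
      calc (∑ j : Fin (m+1), ∑ q : Fin n, C' (i, p) (j, q) * v (j, q))
          = ∑ j : Fin (m+1), ∑ q : Fin n,
              (if q = p then (if j = j₀ then v (j, q) else 0) else 0) :=
            Finset.sum_congr rfl fun j _ => Finset.sum_congr rfl fun q _ => hterm j q
        _ = v (j₀, p) := by simp
    have h := hCv (i, p)
    rw [hsum] at h
    exact h
  set jm : Fin (m+1) := ⟨m, Nat.lt_succ_self m⟩ with hjm
  set w : Fin n → ℂ := fun q => v (jm, q) with hwdef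
  -- all components in terms of w
  have aux : ∀ k : ℕ, k ≤ m → ∀ j : Fin (m+1), (j : ℕ) = m - k → ∀ p,
      v (j, p) = lam ^ k * w p := by
    intro k
    induction k with
    | zero =>
      intro _ j hj p
      have : j = jm := by apply Fin.ext; simp [hjm]; omega
      rw [this, pow_zero, one_mul, hwdef]
    | succ k ih =>
      intro hk j hj p
      set i : Fin (m+1) := ⟨(j : ℕ) + 1, by omega⟩ with hidef
      have hine : i ≠ 0 := by
        intro h
        have := congrArg Fin.val h
        simp [hidef] at this
      have hival : (i : ℕ) = m - k := by simp [hidef]; omega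
      have hstep := hrec i hine p
      have hieq : (⟨(i : ℕ) - 1, by omega⟩ : Fin (m+1)) = j := by
        apply Fin.ext; simp [hidef]
      rw [hieq] at hstep
      rw [hstep, ih (by omega) i hival p, pow_succ]
      ring
  have hall : ∀ (j : Fin (m+1)) (p : Fin n), v (j, p) = lam ^ (m - (j : ℕ)) * w p := by
    intro j p
    exact aux (m - (j : ℕ)) (by omega) j (by omega) p
  -- w ≠ 0
  have hwne : w ≠ 0 := by
    intro h
    apply hv
    funext jq
    have hz := hall jq.1 jq.2
    rw [show w jq.2 = 0 from by rw [h]; rfl, mul_zero] at hz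
    simpa using hz
  refine ⟨w, hwne, fun p => ?_⟩
  -- row 0 equation
  set SA : ℂ := ∑ q, (A.map Complex.ofReal) p q * w q with hSA
  set SB : ℂ := ∑ q, (B.map Complex.ofReal) p q * w q with hSB
  have hjm0 : jm ≠ (0 : Fin (m+1)) := by
    intro h
    have := congrArg Fin.val h
    simp [hjm] at this
    omega
  have hjsum : ∀ j : Fin (m+1), (∑ q, C' ((0 : Fin (m+1)), p) (j, q) * v (j, q))
      = (if j = 0 then v (0, p) + (1 / (m : ℂ)) * (lam ^ m * SA) else 0)
        + (if j = jm then (1 / (m : ℂ)) * SB else 0) := by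
    intro j
    by_cases hj0 : j = 0
    · subst hj0
      rw [if_pos rfl, if_neg (Ne.symm hjm0), add_zero]
      have hterm : ∀ q, C' ((0 : Fin (m+1)), p) ((0 : Fin (m+1)), q) * v (0, q)
          = ((if p = q then (1:ℂ) else 0) + (1 / (m : ℂ)) * (A.map Complex.ofReal) p q)
              * v (0, q) := by
        intro q
        rw [hC', Matrix.map_apply]
        show (((eulerC n m A B) ((0 : Fin (m+1)), p) ((0 : Fin (m+1)), q) : ℝ) : ℂ) * v (0, q) = _
        rw [eulerC]
        simp [apply_ite Complex.ofReal]
      rw [Finset.sum_congr rfl fun q _ => hterm q]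
      have hv0 : ∀ q : Fin n, v ((0 : Fin (m+1)), q) = lam ^ m * w q := by
        intro q
        have := hall 0 q
        simpa using this
      have hv0p : v ((0 : Fin (m+1)), p) = lam ^ m * w p := hv0 p
      calc (∑ q, ((if p = q then (1:ℂ) else 0) + (1 / (m:ℂ)) * (A.map Complex.ofReal) p q)
              * v (0, q))
          = ∑ q, ((if p = q then (1:ℂ) else 0) * v (0, q)
              + (1 / (m:ℂ)) * ((A.map Complex.ofReal) p q * v (0, q))) :=
            Finset.sum_congr rfl fun q _ => by ring
        _ = (∑ q, (if p = q then (1:ℂ) else 0) * v (0, q))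
              + ∑ q, (1 / (m:ℂ)) * ((A.map Complex.ofReal) p q * v (0, q)) :=
            Finset.sum_add_distrib
        _ = v ((0 : Fin (m+1)), p) + (1 / (m:ℂ)) * (lam ^ m * SA) := by
            congr 1
            · simp
            · rw [← Finset.mul_sum]
              congr 1
              rw [hSA, Finset.mul_sum]
              refine Finset.sum_congr rfl fun q _ => ?_
              rw [hv0 q]
              ring
    · rw [if_neg hj0]
      by_cases hjm' : j = jm
      · subst hjm'
        rw [if_pos rfl, zero_add]
        have hterm : ∀ q, C' ((0 : Fin (m+1)), p) (jm, q) * v (jm, q)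
            = (1 / (m : ℂ)) * ((B.map Complex.ofReal) p q * w q) := by
          intro q
          rw [hC', Matrix.map_apply]
          show (((eulerC n m A B) ((0 : Fin (m+1)), p) (jm, q) : ℝ) : ℂ) * v (jm, q) = _
          have h2 : ((jm : Fin (m+1)) : ℕ) = m := rfl
          simp [eulerC, hjm0, h2, hwdef, mul_assoc]
        rw [Finset.sum_congr rfl fun q _ => hterm q, ← Finset.mul_sum, hSB]
      · rw [if_neg hjm']
        have hterm : ∀ q, C' ((0 : Fin (m+1)), p) (j, q) * v (j, q) = 0 := by
          intro q
          rw [hC', Matrix.map_apply]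
          show (((eulerC n m A B) ((0 : Fin (m+1)), p) (j, q) : ℝ) : ℂ) * v (j, q) = _
          have h2 : (j : ℕ) ≠ m := by
            intro h; apply hjm'; apply Fin.ext; rw [h]
          simp [eulerC, hj0, h2]
        rw [Finset.sum_congr rfl fun q _ => hterm q]
        simp
  have h0 := hCv ((0 : Fin (m+1)), p)
  rw [Fintype.sum_prod_type] at h0
  rw [Finset.sum_congr rfl fun j _ => hjsum j] at h0
  rw [Finset.sum_add_distrib] at h0
  simp only [Finset.sum_ite_eq', Finset.mem_univ, if_pos] at h0
  -- h0 : (v (0,p) + (1/m) * (lam^m * SA)) + (1/m) * SB = lam * v (0,p)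
  have hv0p : v ((0 : Fin (m+1)), p) = lam ^ m * w p := by
    have := hall 0 p
    simpa using this
  rw [hv0p] at h0
  have hlm : lam ^ m ≠ 0 := pow_ne_zero _ hlam0
  have hmne : (m : ℂ) ≠ 0 := Nat.cast_ne_zero.mpr hm.ne'
  have hmulA : ((A.map Complex.ofReal).mulVec w) p = SA := by
    rw [hSA]; simp [Matrix.mulVec, dotProduct]
  have hmulB : ((B.map Complex.ofReal).mulVec w) p = SB := by
    rw [hSB]; simp [Matrix.mulVec, dotProduct]
  rw [hmulA, hmulB]
  field_simp at h0
  field_simp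
  linear_combination -h0

lemma small_det {n : ℕ} (A B : Matrix (Fin n) (Fin n) ℝ) (ν c : ℂ)
    (w : Fin n → ℂ) (hw : w ≠ 0)
    (heq : ∀ p, ν * w p = ((A.map Complex.ofReal).mulVec w) p
      + c * ((B.map Complex.ofReal).mulVec w) p) :
    PsiDDE n A B (c, ν) = 0 := by
  classical
  apply (Matrix.exists_mulVec_eq_zero_iff).mp
  refine ⟨w, hw, ?_⟩
  funext p
  simp only [Matrix.sub_mulVec, Matrix.smul_mulVec, Matrix.one_mulVec,
    Pi.sub_apply, Pi.smul_apply, smul_eq_mul, Pi.zero_apply]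
  rw [heq p]
  ring

lemma eig_bound {n : ℕ} (hn : 0 < n) (A B : Matrix (Fin n) (Fin n) ℝ) (ν c : ℂ)
    (hc : Complex.abs c ≤ 1) (w : Fin n → ℂ) (hw : w ≠ 0)
    (heq : ∀ p, ν * w p = ((A.map Complex.ofReal).mulVec w) p
      + c * ((B.map Complex.ofReal).mulVec w) p) :
    Complex.abs ν ≤ ∑ p : Fin n, ∑ q : Fin n, (|A p q| + |B p q|) := by
  classical
  have : Nonempty (Fin n) := ⟨⟨0, hn⟩⟩
  obtain ⟨p₀, -, hp₀⟩ := Finset.exists_max_image Finset.univ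
    (fun p => Complex.abs (w p)) ⟨Classical.arbitrary (Fin n), Finset.mem_univ _⟩
  have hp₀' : ∀ q, Complex.abs (w q) ≤ Complex.abs (w p₀) := fun q => hp₀ q (Finset.mem_univ q)
  have hwp₀ : 0 < Complex.abs (w p₀) := by
    obtain ⟨q, hq⟩ := Function.ne_iff.mp hw
    calc (0:ℝ) < Complex.abs (w q) := by
          simpa using (AbsoluteValue.pos Complex.abs (by simpa using hq))
      _ ≤ Complex.abs (w p₀) := hp₀' q
  have hrow : ∀ (M : Matrix (Fin n) (Fin n) ℝ) (p : Fin n),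
      Complex.abs (((M.map Complex.ofReal).mulVec w) p)
        ≤ (∑ q, |M p q|) * Complex.abs (w p₀) := by
    intro M p
    have h1 : Complex.abs (∑ q, (M.map Complex.ofReal) p q * w q)
        ≤ ∑ q, Complex.abs ((M.map Complex.ofReal) p q * w q) :=
      AbsoluteValue.sum_le _ _ _
    have h2 : ∀ q : Fin n, Complex.abs ((M.map Complex.ofReal) p q * w q)
        ≤ |M p q| * Complex.abs (w p₀) := by
      intro q
      rw [_root_.map_mul, Matrix.map_apply, Complex.abs_ofReal]
      exact mul_le_mul_of_nonneg_left (hp₀' q) (abs_nonneg _)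
    calc Complex.abs (((M.map Complex.ofReal).mulVec w) p)
        = Complex.abs (∑ q, (M.map Complex.ofReal) p q * w q) := rfl
      _ ≤ ∑ q, Complex.abs ((M.map Complex.ofReal) p q * w q) := h1
      _ ≤ ∑ q, |M p q| * Complex.abs (w p₀) := Finset.sum_le_sum fun q _ => h2 q
      _ = (∑ q, |M p q|) * Complex.abs (w p₀) := by rw [Finset.sum_mul]
  have hmain : Complex.abs ν * Complex.abs (w p₀)
      ≤ (∑ q, (|A p₀ q| + |B p₀ q|)) * Complex.abs (w p₀) := by
    rw [← _root_.map_mul, heq p₀]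
    calc Complex.abs (((A.map Complex.ofReal).mulVec w) p₀
            + c * ((B.map Complex.ofReal).mulVec w) p₀)
        ≤ Complex.abs (((A.map Complex.ofReal).mulVec w) p₀)
          + Complex.abs c * Complex.abs (((B.map Complex.ofReal).mulVec w) p₀) := by
          refine le_trans (Complex.abs.add_le _ _) ?_
          rw [_root_.map_mul]
      _ ≤ (∑ q, |A p₀ q|) * Complex.abs (w p₀)
          + 1 * ((∑ q, |B p₀ q|) * Complex.abs (w p₀)) := by
          apply add_le_add (hrow A p₀)
          apply mul_le_mul hc (hrow B p₀) (Complex.abs.nonneg _)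
          exact zero_le_one
      _ = (∑ q, (|A p₀ q| + |B p₀ q|)) * Complex.abs (w p₀) := by
          rw [Finset.sum_add_distrib]; ring
  have h3 : Complex.abs ν ≤ ∑ q, (|A p₀ q| + |B p₀ q|) :=
    le_of_mul_le_mul_right (by linarith [hmain]) hwp₀
  refine le_trans h3 ?_
  apply Finset.single_le_sum (f := fun p => ∑ q, (|A p q| + |B p q|))
    (fun p _ => Finset.sum_nonneg fun q _ => by positivity) (Finset.mem_univ p₀)


theorem stmt_8 (n : ℕ) (hn : 0 < n) (A B : Matrix (Fin n) (Fin n) ℝ)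
    (hA : AssumptionA n A B) :
    ∃ ε₀ > (0 : ℝ), ∀ m : ℕ, 0 < m → (1 : ℝ) / m < ε₀ →
      ∀ lam : ℂ,
        Matrix.det (lam • (1 : Matrix (Fin (m+1) × Fin n) (Fin (m+1) × Fin n) ℂ)
          - (eulerC n m A B).map Complex.ofReal) = 0 →
        ‖lam‖ = 1 → lam = 1 := by
  classical
  obtain ⟨hΔ0, hΔ1, hΔ2, -, hroots⟩ := hA
  by_contra hcon
  push_neg at hcon
  set K₀ : ℝ := ∑ p : Fin n, ∑ q : Fin n, (|A p q| + |B p q|) with hK₀def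
  have hK₀ : 0 ≤ K₀ := Finset.sum_nonneg fun p _ => Finset.sum_nonneg fun q _ => by positivity
  have H : ∀ k : ℕ, ∃ m : ℕ, (0 < m ∧ (k : ℝ) + 1 < (m : ℝ)) ∧ ∃ lam : ℂ,
      (Matrix.det (lam • (1 : Matrix (Fin (m+1) × Fin n) (Fin (m+1) × Fin n) ℂ)
          - (eulerC n m A B).map Complex.ofReal) = 0 ∧ Complex.abs lam = 1 ∧ lam ≠ 1) := by
    intro k
    obtain ⟨m, hm, hlt, lam, hd, ha, hne⟩ := hcon (1/((k:ℝ)+1)) (by positivity)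
    refine ⟨m, ⟨hm, ?_⟩, lam, hd, ha, hne⟩
    have hmpos : (0:ℝ) < m := by exact_mod_cast hm
    rw [div_lt_div_iff₀ hmpos (by positivity)] at hlt
    linarith
  choose M hMP using H
  choose lam hL using fun k => (hMP k).2
  have hM1 : ∀ k, 0 < M k := fun k => (hMP k).1.1
  have hM2 : ∀ k : ℕ, (k : ℝ) + 1 < (M k : ℝ) := fun k => (hMP k).1.2
  have hdet := fun k => (hL k).1
  have habs := fun k => (hL k).2.1
  have hlamne := fun k => (hL k).2.2
  have hlam0 : ∀ k, lam k ≠ 0 := by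
    intro k h
    have := habs k
    rw [h] at this
    simp at this
  choose w hw heq using fun k => euler_eigen (hM1 k) A B (lam k) (hlam0 k) (hdet k)
  set ν : ℕ → ℂ := fun k => (M k : ℂ) * (lam k - 1) with hνdef
  set c : ℕ → ℂ := fun k => ((lam k) ^ (M k))⁻¹ with hcdef
  have heq' : ∀ k p, ν k * w k p = ((A.map Complex.ofReal).mulVec (w k)) p
      + c k * ((B.map Complex.ofReal).mulVec (w k)) p := fun k p => heq k p
  have habsc : ∀ k, Complex.abs (c k) = 1 := by
    intro k
    rw [hcdef]
    simp [map_inv₀, map_pow, habs k]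
  have hνK : ∀ k, Complex.abs (ν k) ≤ K₀ := fun k =>
    eig_bound hn A B (ν k) (c k) (le_of_eq (habsc k)) (w k) (hw k) (heq' k)
  have hν0 : ∀ k, ν k ≠ 0 := fun k =>
    mul_ne_zero (Nat.cast_ne_zero.mpr (hM1 k).ne') (sub_ne_zero.mpr (hlamne k))
  have hMnec : ∀ k, ((M k : ℕ) : ℂ) ≠ 0 := fun k => Nat.cast_ne_zero.mpr (hM1 k).ne'
  have hlameq : ∀ k, lam k = 1 + ν k / (M k : ℂ) := by
    intro k
    have h1 : ν k / (M k : ℂ) = lam k - 1 := by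
      show (M k : ℂ) * (lam k - 1) / (M k : ℂ) = lam k - 1
      rw [mul_comm, mul_div_assoc, div_self (hMnec k), mul_one]
    rw [h1]; ring
  have hpsi0 : ∀ k, PsiDDE n A B (c k, ν k) = 0 := fun k =>
    small_det A B (ν k) (c k) (w k) (hw k) (heq' k)
  have hMR : ∀ k, (0:ℝ) < (M k : ℝ) := fun k => by exact_mod_cast (hM1 k)
  have hre : ∀ k, |(ν k).re| ≤ K₀^2 / (2 * (M k : ℝ)) := by
    intro k
    have h1 : Complex.normSq (lam k) = 1 := by
      rw [← Complex.sq_abs, habs k]; norm_num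
    set t : ℂ := lam k - 1 with ht
    have h2 : Complex.normSq (1 + t) = 1 + 2*t.re + Complex.normSq t := by
      simp [Complex.normSq_apply, Complex.add_re, Complex.add_im]; ring
    have h3 : (1:ℂ) + t = lam k := by rw [ht]; ring
    rw [h3, h1] at h2
    have h4 : t.re = - (Complex.normSq t) / 2 := by linarith
    have h5 : (ν k).re = (M k : ℝ) * t.re := by
      show ((M k : ℂ) * t).re = (M k : ℝ) * t.re
      rw [Complex.mul_re]
      simp
    have habsν : Complex.abs (ν k) = (M k : ℝ) * Complex.abs t := by
      rw [hνdef]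
      simp [_root_.map_mul, Complex.abs_natCast]
      exact Or.inl rfl
    have h8 : |(ν k).re| = (M k : ℝ) * (Complex.normSq t / 2) := by
      rw [h5, h4, abs_mul, _root_.abs_of_nonneg (hMR k).le, abs_div, abs_neg,
        _root_.abs_of_nonneg (Complex.normSq_nonneg t), _root_.abs_of_nonneg (by norm_num : (0:ℝ) ≤ 2)]
    rw [h8, le_div_iff₀ (mul_pos two_pos (hMR k))]
    have h9 : (M k : ℝ) * Complex.abs t ≤ K₀ := by rw [← habsν]; exact hνK k
    have h10 : Complex.normSq t = Complex.abs t ^ 2 := (Complex.sq_abs t).symm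
    rw [h10]
    have h11 : ((M k:ℝ) * Complex.abs t) * ((M k:ℝ) * Complex.abs t) ≤ K₀ * K₀ :=
      mul_le_mul h9 h9 (by positivity) hK₀
    nlinarith [Complex.abs.nonneg t, (hMR k)]
  have hMtop : Tendsto (fun k => (M k : ℝ)) atTop atTop := by
    apply tendsto_atTop_mono (fun k => le_of_lt ?_) tendsto_natCast_atTop_atTop
    linarith [hM2 k]
  -- Bolzano-Weierstrass
  set u : ℕ → ℂ × ℂ := fun k => (c k, ν k) with hu
  have humem : ∀ k, u k ∈ closedBall (0 : ℂ × ℂ) (K₀ + 1) := by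
    intro k
    rw [mem_closedBall, dist_zero_right, Prod.norm_def]
    apply max_le
    · rw [Complex.norm_eq_abs]
      show Complex.abs (c k) ≤ K₀ + 1
      rw [habsc k]; linarith
    · rw [Complex.norm_eq_abs]
      show Complex.abs (ν k) ≤ K₀ + 1
      linarith [hνK k]
  obtain ⟨z, -, φ, hφ, hzconv⟩ := tendsto_subseq_of_bounded isBounded_closedBall humem
  have hcφ : Tendsto (fun j => c (φ j)) atTop (𝓝 z.1) := (continuous_fst.tendsto z).comp hzconv
  have hνφ : Tendsto (fun j => ν (φ j)) atTop (𝓝 z.2) := (continuous_snd.tendsto z).comp hzconv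
  have hMφ : Tendsto (fun j => (M (φ j) : ℝ)) atTop atTop := hMtop.comp hφ.tendsto_atTop
  -- real part of limit is zero
  have hνre0 : Tendsto (fun j => (ν (φ j)).re) atTop (𝓝 0) := by
    apply squeeze_zero_norm (fun j => hre (φ j))
    have h2M : Tendsto (fun j => 2 * (M (φ j) : ℝ)) atTop atTop :=
      hMφ.const_mul_atTop two_pos
    exact Tendsto.div_atTop tendsto_const_nhds h2M
  have hz2re : z.2.re = 0 :=
    tendsto_nhds_unique ((Complex.continuous_re.tendsto z.2).comp hνφ) hνre0
  -- quantitative comparison of c with exp(-ν)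
  set Ecst : ℝ := 2 * Real.exp K₀ with hEcst
  have hEcst0 : 0 < Ecst := by rw [hEcst]; positivity
  have hkey : ∀ k, 2*K₀ ≤ (M k : ℝ) → K₀^2 ≤ (M k : ℝ) →
      Complex.abs (c k - Complex.exp (-ν k)) ≤ Ecst * Complex.abs (ν k)^2 / (M k : ℝ) := by
    intro k h1 h2
    have hck : c k = (((1 : ℂ) + ν k / (M k : ℂ)) ^ (M k))⁻¹ := by
      rw [hcdef]
      show ((lam k) ^ (M k))⁻¹ = _
      rw [← hlameq k]
    rw [hck]
    have hb1 : 2 * Complex.abs (ν k) ≤ (M k : ℝ) := by linarith [hνK k]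
    have hb2 : Complex.abs (ν k) ^ 2 ≤ (M k : ℝ) := by
      refine le_trans ?_ h2
      exact pow_le_pow_left₀ (Complex.abs.nonneg _) (hνK k) 2
    refine le_trans (keybound (hM1 k) (ν k) hb1 hb2) ?_
    rw [hEcst]
    gcongr
    · exact hνK k
  have hev_ge : ∀ᶠ j in atTop, 2*K₀ ≤ (M (φ j) : ℝ) ∧ K₀^2 ≤ (M (φ j) : ℝ) := by
    filter_upwards [hMφ.eventually_ge_atTop (2*K₀), hMφ.eventually_ge_atTop (K₀^2)]
      with j ha hb
    exact ⟨ha, hb⟩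
  -- limit of c is exp(-ν*)
  have hexp : Tendsto (fun j => Complex.exp (-ν (φ j))) atTop (𝓝 (Complex.exp (-z.2))) :=
    (Complex.continuous_exp.tendsto _).comp hνφ.neg
  have hdiff0 : Tendsto (fun j => c (φ j) - Complex.exp (-ν (φ j))) atTop (𝓝 0) := by
    have hb : ∀ᶠ j in atTop, ‖c (φ j) - Complex.exp (-ν (φ j))‖
        ≤ Ecst * K₀^2 / (M (φ j) : ℝ) := by
      filter_upwards [hev_ge] with j hj
      rw [Complex.norm_eq_abs]
      refine le_trans (hkey (φ j) hj.1 hj.2) ?_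
      gcongr
      · exact hνK (φ j)
    exact squeeze_zero_norm' hb (Tendsto.div_atTop tendsto_const_nhds hMφ)
  have hcφ' : Tendsto (fun j => c (φ j)) atTop (𝓝 (Complex.exp (-z.2))) := by
    have h := hdiff0.add hexp
    rw [zero_add] at h
    have heqf : (fun j => (c (φ j) - Complex.exp (-ν (φ j))) + Complex.exp (-ν (φ j)))
        = fun j => c (φ j) := by funext j; ring
    rwa [heqf] at h
  have hz1 : z.1 = Complex.exp (-z.2) := tendsto_nhds_unique hcφ hcφ'
  -- the limit is a root of the characteristic function
  have hPsiz : PsiDDE n A B z = 0 := by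
    have h1 : Tendsto (fun j => PsiDDE n A B (u (φ j))) atTop (𝓝 (PsiDDE n A B z)) :=
      (((psi_contDiff n A B).continuous).tendsto z).comp hzconv
    have h2 : (fun j => PsiDDE n A B (u (φ j))) = fun _ => (0:ℂ) :=
      funext fun j => hpsi0 (φ j)
    rw [h2] at h1
    exact tendsto_nhds_unique h1 tendsto_const_nhds
  have hchar : charDDE n A B z.2 = 0 := by
    rw [charDDE_eq_psi, ← hz1]
    show PsiDDE n A B (z.1, z.2) = 0
    rw [Prod.mk.eta]
    exact hPsiz
  have hz2 : z.2 = 0 := by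
    by_contra hne
    exact hroots z.2 hne hchar hz2re
  -- final contradiction: zoom in at zero
  have hν0' : Tendsto (fun j => ν (φ j)) atTop (𝓝[≠] (0:ℂ)) := by
    rw [hz2] at hνφ
    refine tendsto_nhdsWithin_iff.mpr ⟨hνφ, Filter.Eventually.of_forall fun j => ?_⟩
    simp [hν0 (φ j)]
  obtain ⟨ρ, hρ, hquad_ev⟩ := quad_lower ((charDDE_differentiable n A B).analyticAt 0) hΔ0 hΔ1 hΔ2
  have hquadj : ∀ᶠ j in atTop,
      ρ * Complex.abs (ν (φ j))^2 ≤ Complex.abs (charDDE n A B (ν (φ j))) :=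
    hν0'.eventually hquad_ev
  obtain ⟨L, t, ht, hlip⟩ :=
    ((psi_contDiff n A B).contDiffAt (x := ((1:ℂ),(0:ℂ)))).exists_lipschitzOnWith
  have hzval : z = ((1:ℂ), (0:ℂ)) := by
    have : z.1 = 1 := by rw [hz1, hz2]; simp
    exact Prod.ext this hz2
  rw [hzval] at hzconv
  have hbt : Tendsto (fun j => (Complex.exp (-ν (φ j)), ν (φ j))) atTop
      (𝓝 ((1:ℂ), (0:ℂ))) := by
    rw [hz2] at hexp hνφ
    rw [show ((1:ℂ), (0:ℂ)) = (Complex.exp (-(0:ℂ)), (0:ℂ)) by simp]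
    exact hexp.prodMk_nhds hνφ
  have hat : ∀ᶠ j in atTop, u (φ j) ∈ t := hzconv.eventually_mem ht
  have hbt_mem : ∀ᶠ j in atTop, (Complex.exp (-ν (φ j)), ν (φ j)) ∈ t := hbt.eventually_mem ht
  have hfinal : ∀ᶠ _j : ℕ in atTop, False := by
    filter_upwards [hat, hbt_mem, hquadj, hev_ge,
      hMφ.eventually_gt_atTop ((L:ℝ) * Ecst / ρ)] with j h1 h2 h3 h4 h5
    set νj := ν (φ j) with hνj
    set Mj : ℝ := (M (φ j) : ℝ) with hMj
    have hMj0 : 0 < Mj := hMR (φ j)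
    have habs2 : 0 < Complex.abs νj ^ 2 := by
      have := AbsoluteValue.pos Complex.abs (hν0 (φ j))
      positivity
    -- |Δ(νj)| ≤ L * |c - exp(-ν)|
    have hA1 : Complex.abs (charDDE n A B νj)
        ≤ (L:ℝ) * (Ecst * Complex.abs νj^2 / Mj) := by
      have hd1 : Complex.abs (charDDE n A B νj)
          = dist (PsiDDE n A B (Complex.exp (-νj), νj)) (PsiDDE n A B (u (φ j))) := by
        rw [hpsi0 (φ j), dist_zero_right, charDDE_eq_psi, Complex.norm_eq_abs]
      rw [hd1]
      refine le_trans (hlip.dist_le_mul _ h2 _ h1) ?_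
      have hd2 : dist ((Complex.exp (-νj), νj)) (u (φ j))
          = Complex.abs (c (φ j) - Complex.exp (-νj)) := by
        rw [Prod.dist_eq]
        show max (dist (Complex.exp (-νj)) (c (φ j))) (dist νj νj) = _
        rw [dist_self, max_eq_left dist_nonneg, Complex.dist_eq, Complex.norm_eq_abs, ← AbsoluteValue.map_sub]
      rw [hd2]
      exact mul_le_mul_of_nonneg_left (hkey (φ j) h4.1 h4.2) L.coe_nonneg
    have hchain : ρ * Complex.abs νj^2 ≤ ((L:ℝ) * Ecst / Mj) * Complex.abs νj^2 := by
      refine le_trans h3 ?_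
      have hrearr : (L:ℝ) * (Ecst * Complex.abs νj^2 / Mj)
          = ((L:ℝ) * Ecst / Mj) * Complex.abs νj^2 := by ring
      rw [← hrearr]
      exact hA1
    have hρle : ρ ≤ (L:ℝ) * Ecst / Mj := le_of_mul_le_mul_right hchain habs2
    have hlt : (L:ℝ) * Ecst / Mj < ρ := by
      rw [div_lt_iff₀ hMj0]
      rw [div_lt_iff₀ hρ] at h5
      linarith
    linarith
  exact (hfinal.exists).elim fun _ hf => hf
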